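/- Let m be a positive integer and let K₁ and K₂ be n-dimensional convex bodies with d(K₁) ≥ 2, d(K₂) ≥ 2 and Hausdorff distance δ^H(K₁, K₂) ≤ ε. Then |f_m(K₁) − f_m(K₂)| ≤ 2ε. In particular, the functional f_m is continuous on the space of n-dimensional convex bodies equipped with the Hausdorff metric. -/
import Mathlib


/-- f_m(K): the smallest θ such that K can be written as a union of m subsets, each
of diameter at most θ·d(K). -/
noncomputable def borsukRatio {n : ℕ} (m : ℕ)
    (K : Set (EuclideanSpace ℝ (Fin n))) : ℝ :=
  sInf {θ : ℝ | ∃ Y : Fin m → Set (EuclideanSpace ℝ (Fin n)),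
    K = ⋃ i, Y i ∧ ∀ i, Metric.diam (Y i) ≤ θ * Metric.diam K}

lemma borsukRatio_aux_bddBelow {n : ℕ} (m : ℕ) (hm : 0 < m)
    (K : Set (EuclideanSpace ℝ (Fin n))) (hd : 0 < Metric.diam K) :
    BddBelow {θ : ℝ | ∃ Y : Fin m → Set (EuclideanSpace ℝ (Fin n)),
      K = ⋃ i, Y i ∧ ∀ i, Metric.diam (Y i) ≤ θ * Metric.diam K} := by
  refine ⟨0, fun θ hθ => ?_⟩
  obtain ⟨Y, -, hY⟩ := hθ
  have h0 : 0 ≤ θ * Metric.diam K :=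
    le_trans Metric.diam_nonneg (hY ⟨0, hm⟩)
  exact le_of_mul_le_mul_right (by linarith) hd

lemma borsukRatio_aux_mem_one {n : ℕ} (m : ℕ) (hm : 0 < m)
    (K : Set (EuclideanSpace ℝ (Fin n))) :
    (1 : ℝ) ∈ {θ : ℝ | ∃ Y : Fin m → Set (EuclideanSpace ℝ (Fin n)),
      K = ⋃ i, Y i ∧ ∀ i, Metric.diam (Y i) ≤ θ * Metric.diam K} := by
  haveI : Nonempty (Fin m) := Fin.pos_iff_nonempty.mp hm
  exact ⟨fun _ => K, (Set.iUnion_const K).symm, fun i => by simp⟩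

lemma borsukRatio_key {n : ℕ} (m : ℕ) (hm : 0 < m) (ε : ℝ) (hε : 0 ≤ ε)
    (K₁ K₂ : Set (EuclideanSpace ℝ (Fin n)))
    (hK₁c : IsCompact K₁) (hK₂c : IsCompact K₂)
    (hd₁ : 2 ≤ Metric.diam K₁) (hd₂ : 2 ≤ Metric.diam K₂)
    (hH : Metric.hausdorffDist K₁ K₂ ≤ ε) :
    borsukRatio m K₁ ≤ borsukRatio m K₂ + 2 * ε := by
  have hd₁0 : 0 < Metric.diam K₁ := lt_of_lt_of_le two_pos hd₁
  have hd₂0 : 0 < Metric.diam K₂ := lt_of_lt_of_le two_pos hd₂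
  have hK₁ne : K₁.Nonempty := by
    rcases Set.eq_empty_or_nonempty K₁ with h | h
    · rw [h, Metric.diam_empty] at hd₁0; exact absurd hd₁0 (lt_irrefl 0)
    · exact h
  have hK₂ne : K₂.Nonempty := by
    rcases Set.eq_empty_or_nonempty K₂ with h | h
    · rw [h, Metric.diam_empty] at hd₂0; exact absurd hd₂0 (lt_irrefl 0)
    · exact h
  have hfin : EMetric.hausdorffEdist K₁ K₂ ≠ ⊤ :=
    Metric.hausdorffEdist_ne_top_of_nonempty_of_bounded hK₁ne hK₂ne
      hK₁c.isBounded hK₂c.isBounded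
  -- diam K₂ ≤ diam K₁ + 2ε
  have hsub : K₂ ⊆ Metric.cthickening ε K₁ := by
    intro y hy
    have hinf : Metric.infDist y K₁ ≤ ε := by
      calc Metric.infDist y K₁ ≤ Metric.hausdorffDist K₂ K₁ :=
            Metric.infDist_le_hausdorffDist_of_mem hy
              (by rwa [EMetric.hausdorffEdist_comm])
        _ = Metric.hausdorffDist K₁ K₂ := Metric.hausdorffDist_comm
        _ ≤ ε := hH
    obtain ⟨z, hzK₁, hyz⟩ := hK₁c.exists_infDist_eq_dist hK₁ne y
    exact Metric.mem_cthickening_of_dist_le y z ε K₁ hzK₁ (by rw [← hyz]; exact hinf)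
  have hdle : Metric.diam K₂ ≤ Metric.diam K₁ + 2 * ε :=
    le_trans (Metric.diam_mono hsub (hK₁c.isBounded.cthickening))
      (Metric.diam_cthickening_le K₁ hε)
  set f₂ := borsukRatio m K₂ with hf₂
  have hbdd₂ := borsukRatio_aux_bddBelow m hm K₂ hd₂0
  have hS₂ne : {θ : ℝ | ∃ Y : Fin m → Set (EuclideanSpace ℝ (Fin n)),
      K₂ = ⋃ i, Y i ∧ ∀ i, Metric.diam (Y i) ≤ θ * Metric.diam K₂}.Nonempty :=
    ⟨1, borsukRatio_aux_mem_one m hm K₂⟩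
  have hf₂le1 : f₂ ≤ 1 := csInf_le hbdd₂ (borsukRatio_aux_mem_one m hm K₂)
  have hf₂0 : 0 ≤ f₂ := le_csInf hS₂ne fun θ hθ => by
    obtain ⟨Y, -, hY⟩ := hθ
    exact le_of_mul_le_mul_right (by linarith [le_trans Metric.diam_nonneg (hY ⟨0, hm⟩)]) hd₂0
  have main : ∀ δ : ℝ, 0 < δ → borsukRatio m K₁ ≤ f₂ + 2 * ε + δ * (1 + ε) := by
    intro δ hδ
    obtain ⟨θ, hθmem, hθlt⟩ := Real.lt_sInf_add_pos hS₂ne hδ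
    have hθ0 : 0 ≤ θ := by
      obtain ⟨Y, -, hY⟩ := hθmem
      exact le_of_mul_le_mul_right (by linarith [le_trans Metric.diam_nonneg (hY ⟨0, hm⟩)]) hd₂0
    obtain ⟨Y, hYun, hYd⟩ := hθmem
    -- decomposition of K₁
    set X : Fin m → Set (EuclideanSpace ℝ (Fin n)) :=
      fun i => K₁ ∩ Metric.cthickening ε (Y i) with hX
    have hun : K₁ = ⋃ i, X i := by
      apply Set.Subset.antisymm
      · intro x hx
        have hinf : Metric.infDist x K₂ ≤ ε :=
          le_trans (Metric.infDist_le_hausdorffDist_of_mem hx hfin) hH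
        obtain ⟨y, hyK₂, hxy⟩ := hK₂c.exists_infDist_eq_dist hK₂ne x
        rw [hYun] at hyK₂
        obtain ⟨i, hyi⟩ := Set.mem_iUnion.mp hyK₂
        refine Set.mem_iUnion.mpr ⟨i, hx, ?_⟩
        exact Metric.mem_cthickening_of_dist_le x y ε (Y i) hyi (by rw [← hxy]; exact hinf)
      · exact Set.iUnion_subset fun i => Set.inter_subset_left
    have hdiamX : ∀ i, Metric.diam (X i) ≤ θ * Metric.diam K₂ + 2 * ε := by
      intro i
      have hYiK₂ : Y i ⊆ K₂ := hYun ▸ Set.subset_iUnion Y i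
      have hb : Bornology.IsBounded (Metric.cthickening ε (Y i)) :=
        (hK₂c.isBounded.subset hYiK₂).cthickening
      calc Metric.diam (X i) ≤ Metric.diam (Metric.cthickening ε (Y i)) :=
            Metric.diam_mono Set.inter_subset_right hb
        _ ≤ Metric.diam (Y i) + 2 * ε := Metric.diam_cthickening_le _ hε
        _ ≤ θ * Metric.diam K₂ + 2 * ε := by linarith [hYd i]
    have hmem₁ : (θ * Metric.diam K₂ + 2 * ε) / Metric.diam K₁ ∈
        {θ' : ℝ | ∃ Y : Fin m → Set (EuclideanSpace ℝ (Fin n)),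
          K₁ = ⋃ i, Y i ∧ ∀ i, Metric.diam (Y i) ≤ θ' * Metric.diam K₁} := by
      refine ⟨X, hun, fun i => ?_⟩
      rw [div_mul_cancel₀ _ (ne_of_gt hd₁0)]
      exact hdiamX i
    have h1 : borsukRatio m K₁ ≤ (θ * Metric.diam K₂ + 2 * ε) / Metric.diam K₁ :=
      csInf_le (borsukRatio_aux_bddBelow m hm K₁ hd₁0) hmem₁
    refine le_trans h1 ?_
    rw [div_le_iff₀ hd₁0]
    have hθub : θ ≤ f₂ + δ := le_of_lt hθlt
    nlinarith [mul_nonneg hε hθ0, mul_nonneg hε (le_of_lt hδ),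
      mul_le_mul_of_nonneg_left hdle hθ0,
      mul_le_mul_of_nonneg_right hθub (le_of_lt hd₁0),
      mul_nonneg (le_of_lt hδ) (le_of_lt hd₁0),
      mul_le_mul_of_nonneg_left hd₁ hε]
  refine le_of_forall_pos_le_add fun δ hδ => ?_
  have h1ε : (0:ℝ) < 1 + ε := by linarith
  have := main (δ / (1 + ε)) (div_pos hδ h1ε)
  rwa [div_mul_cancel₀ _ (ne_of_gt h1ε)] at this

/-- The functional f_m is continuous on the space of convex bodies: if K₁, K₂ are
n-dimensional convex bodies with d(K₁) ≥ 2, d(K₂) ≥ 2 and Hausdorff distance at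
most ε, then |f_m(K₁) − f_m(K₂)| ≤ 2ε. -/
theorem borsukRatio_lipschitz (n m : ℕ) (hm : 0 < m) (ε : ℝ)
    (K₁ K₂ : Set (EuclideanSpace ℝ (Fin n)))
    (hK₁c : IsCompact K₁) (hK₁conv : Convex ℝ K₁) (hK₁int : (interior K₁).Nonempty)
    (hK₂c : IsCompact K₂) (hK₂conv : Convex ℝ K₂) (hK₂int : (interior K₂).Nonempty)
    (hd₁ : 2 ≤ Metric.diam K₁) (hd₂ : 2 ≤ Metric.diam K₂)
    (hH : Metric.hausdorffDist K₁ K₂ ≤ ε) :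
    |borsukRatio m K₁ - borsukRatio m K₂| ≤ 2 * ε := by
  have hε : 0 ≤ ε := le_trans Metric.hausdorffDist_nonneg hH
  have hH' : Metric.hausdorffDist K₂ K₁ ≤ ε := by
    rwa [Metric.hausdorffDist_comm]
  rw [abs_sub_le_iff]
  constructor
  · have := borsukRatio_key m hm ε hε K₁ K₂ hK₁c hK₂c hd₁ hd₂ hH
    linarith
  · have := borsukRatio_key m hm ε hε K₂ K₁ hK₂c hK₁c hd₂ hd₁ hH'
    linarith
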